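/- Signed area difference between M and its involute N: SA(M) - SA(N) = ∫₀^π β²(θ)[v,v'](θ) dθ, where SA(M) = -∫₀^π [M,M']dθ is the signed area (over a half-period, using the symmetry relations). -/

import Mathlib

open Real

/-- Determinant of two plane vectors. -/
noncomputable def det2 (w₁ w₂ : ℝ × ℝ) : ℝ := w₁.1 * w₂.2 - w₁.2 * w₂.1

lemma det2_hasDerivAt {A B : ℝ → ℝ × ℝ} {A' B' : ℝ × ℝ} {θ : ℝ}
    (hA : HasDerivAt A A' θ) (hB : HasDerivAt B B' θ) :
    HasDerivAt (fun t => det2 (A t) (B t)) (det2 A' (B θ) + det2 (A θ) B') θ := by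
  have hA1 : HasDerivAt (fun t => (A t).1) A'.1 θ := by
    simpa using (hA.hasFDerivAt.fst).hasDerivAt
  have hA2 : HasDerivAt (fun t => (A t).2) A'.2 θ := by
    simpa using (hA.hasFDerivAt.snd).hasDerivAt
  have hB1 : HasDerivAt (fun t => (B t).1) B'.1 θ := by
    simpa using (hB.hasFDerivAt.fst).hasDerivAt
  have hB2 : HasDerivAt (fun t => (B t).2) B'.2 θ := by
    simpa using (hB.hasFDerivAt.snd).hasDerivAt
  have h1 := (hA1.mul hB2).sub (hA2.mul hB1)
  refine h1.congr_deriv ?_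
  simp only [det2]; ring

/-- Signed area difference between the area evolute M and its involute
N = M + βv: SA(M) - SA(N) = ∫₀^π β²[v,v'] dθ. -/
theorem signed_area_difference (u u' v v' M : ℝ → ℝ × ℝ) (α β : ℝ → ℝ)
    (hu : ∀ θ, HasDerivAt u (u' θ) θ)
    (hdet : ∀ θ, 0 < det2 (u θ) (u' θ))
    (husym : ∀ θ, u (θ + π) = -u θ)
    (hv : ∀ θ, v θ = (det2 (u θ) (u' θ))⁻¹ • u' θ)
    (hv' : ∀ θ, HasDerivAt v (v' θ) θ)
    (hM : ∀ θ, HasDerivAt M (α θ • u' θ) θ)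
    (hMper : ∀ θ, M (θ + π) = M θ)
    (hαsym : ∀ θ, α (θ + π) = -α θ)
    (hβ : ∀ θ, HasDerivAt β (-(α θ * det2 (u θ) (u' θ))) θ)
    (hβanti : ∀ θ, β (θ + π) = -β θ)
    (hcontα : Continuous α) (hcontu' : Continuous u') (hcontv' : Continuous v') :
    (-(∫ θ in (0:ℝ)..π, det2 (M θ) (α θ • u' θ)))
      - (-(∫ θ in (0:ℝ)..π, det2 (M θ + β θ • v θ) (β θ • v' θ)))
      = ∫ θ in (0:ℝ)..π, (β θ) ^ 2 * det2 (v θ) (v' θ) := by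
  -- continuity facts
  have contM : Continuous M := by
    rw [continuous_iff_continuousAt]; exact fun t => (hM t).continuousAt
  have contβ : Continuous β := by
    rw [continuous_iff_continuousAt]; exact fun t => (hβ t).continuousAt
  have contv : Continuous v := by
    rw [continuous_iff_continuousAt]; exact fun t => (hv' t).continuousAt
  -- derivative of βv
  have hβv : ∀ θ, HasDerivAt (fun t => β t • v t)
      (β θ • v' θ - α θ • u' θ) θ := by
    intro θ
    have h := (hβ θ).smul (hv' θ)
    refine h.congr_deriv ?_
    have hd := (hdet θ).ne'
    rw [hv θ, smul_smul]
    have he : -(α θ * det2 (u θ) (u' θ)) * (det2 (u θ) (u' θ))⁻¹ = -α θ := by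
      field_simp
    rw [he]
    module
  -- derivative of f = det2 M (βv)
  have hf : ∀ θ, HasDerivAt (fun t => det2 (M t) (β t • v t))
      (det2 (M θ) (β θ • v' θ) - det2 (M θ) (α θ • u' θ)) θ := by
    intro θ
    have h := det2_hasDerivAt (hM θ) (hβv θ)
    have hz : det2 (α θ • u' θ) (β θ • v θ) = 0 := by
      rw [hv θ]
      simp only [det2, Prod.smul_fst, Prod.smul_snd, smul_eq_mul]
      ring
    rw [hz, zero_add] at h
    convert h using 1
    simp only [det2, Prod.fst_sub, Prod.snd_sub, Prod.smul_fst, Prod.smul_snd,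
      smul_eq_mul]
    ring
  -- symmetry of u'
  have hu'sym : ∀ θ, u' (θ + π) = -u' θ := by
    intro θ
    have h1 : HasDerivAt (fun t => u (t + π)) (u' (θ + π)) θ :=
      (hu (θ + π)).comp_add_const θ π
    have h2 : HasDerivAt (fun t => u (t + π)) (-u' θ) θ := by
      have heq : (fun t => u (t + π)) = fun t => -u t := funext husym
      rw [heq]; exact (hu θ).neg
    exact h1.unique h2
  -- boundary values
  have hvπ : v π = -v 0 := by
    have h0 : ((0:ℝ) + π) = π := zero_add π
    have hu0 : u π = -u 0 := by rw [← h0]; exact husym 0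
    have hu'0 : u' π = -u' 0 := by rw [← h0]; exact hu'sym 0
    rw [hv π, hv 0, hu0, hu'0]
    have he : det2 (-u 0) (-u' 0) = det2 (u 0) (u' 0) := by
      simp only [det2, Prod.fst_neg, Prod.snd_neg]; ring
    rw [he, smul_neg]
  have hβπ : β π = -β 0 := by
    have h0 : ((0:ℝ) + π) = π := zero_add π
    rw [← h0]; exact hβanti 0
  have hMπ : M π = M 0 := by
    have h0 : ((0:ℝ) + π) = π := zero_add π
    rw [← h0]; exact hMper 0
  -- key integral vanishes
  have key : (∫ θ in (0:ℝ)..π,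
      (det2 (M θ) (β θ • v' θ) - det2 (M θ) (α θ • u' θ))) = 0 := by
    have hcont : Continuous (fun θ =>
        det2 (M θ) (β θ • v' θ) - det2 (M θ) (α θ • u' θ)) := by
      unfold det2; fun_prop
    rw [intervalIntegral.integral_eq_sub_of_hasDerivAt
      (fun t _ => hf t) (hcont.intervalIntegrable 0 π)]
    rw [hMπ, hβπ, hvπ]
    simp [det2]
  -- split B
  have hBsplit : ∀ θ, det2 (M θ + β θ • v θ) (β θ • v' θ)
      = (det2 (M θ) (β θ • v' θ) - det2 (M θ) (α θ • u' θ))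
        + det2 (M θ) (α θ • u' θ) + (β θ) ^ 2 * det2 (v θ) (v' θ) := by
    intro θ
    simp [det2, Prod.smul_fst, Prod.smul_snd, smul_eq_mul]
    ring
  have i1 : Continuous (fun θ =>
      det2 (M θ) (β θ • v' θ) - det2 (M θ) (α θ • u' θ)) := by
    unfold det2; fun_prop
  have i2 : Continuous (fun θ => det2 (M θ) (α θ • u' θ)) := by
    unfold det2; fun_prop
  have i3 : Continuous (fun θ => (β θ) ^ 2 * det2 (v θ) (v' θ)) := by
    unfold det2; fun_prop
  calc (-(∫ θ in (0:ℝ)..π, det2 (M θ) (α θ • u' θ)))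
      - (-(∫ θ in (0:ℝ)..π, det2 (M θ + β θ • v θ) (β θ • v' θ)))
      = (∫ θ in (0:ℝ)..π, det2 (M θ + β θ • v θ) (β θ • v' θ))
        - ∫ θ in (0:ℝ)..π, det2 (M θ) (α θ • u' θ) := by ring
    _ = ((∫ θ in (0:ℝ)..π,
          (det2 (M θ) (β θ • v' θ) - det2 (M θ) (α θ • u' θ)))
        + (∫ θ in (0:ℝ)..π, det2 (M θ) (α θ • u' θ))
        + ∫ θ in (0:ℝ)..π, (β θ) ^ 2 * det2 (v θ) (v' θ))
        - ∫ θ in (0:ℝ)..π, det2 (M θ) (α θ • u' θ) := by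
        congr 1
        rw [← intervalIntegral.integral_add (i1.intervalIntegrable 0 π)
            (i2.intervalIntegrable 0 π),
          ← intervalIntegral.integral_add (f := fun θ => det2 (M θ) (β θ • v' θ) - det2 (M θ) (α θ • u' θ) + det2 (M θ) (α θ • u' θ))
            ((i1.add i2).intervalIntegrable 0 π) (i3.intervalIntegrable 0 π)]
        exact intervalIntegral.integral_congr (fun θ _ => hBsplit θ)
    _ = ∫ θ in (0:ℝ)..π, (β θ) ^ 2 * det2 (v θ) (v' θ) := by
        rw [key]; ring
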